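/- Let γ ∈ (0,1) and ξ ∈ ℝ \ {0}. Then for all 0 ≤ N₁ < N₂, the integral ∫_{N₁}^{N₂} e^{iξt}/t^γ dt satisfies |∫_{N₁}^{N₂} e^{iξt} t^{-γ} dt| ≤ 2^γ (2/|ξ| + 1/(1-γ)) / (N₁+1)^γ. -/

import Mathlib

open MeasureTheory Real Filter Topology

lemma osc_integrable (γ ξ : ℝ) (hγ : γ < 1) (a b : ℝ) :
    IntervalIntegrable (fun t : ℝ => Complex.exp (Complex.I * (ξ:ℂ) * (t:ℂ)) * ((t ^ (-γ) : ℝ) : ℂ))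
      volume a b := by
  have h := intervalIntegral.intervalIntegrable_rpow' (a := a) (b := b)
    (by linarith : (-1:ℝ) < -γ)
  have h2 : IntervalIntegrable (fun t : ℝ => ((t ^ (-γ) : ℝ) : ℂ)) volume a b :=
    ⟨h.1.ofReal, h.2.ofReal⟩
  exact h2.continuousOn_mul (Continuous.continuousOn (by continuity))

lemma osc_ibp (γ ξ : ℝ) (hγ0 : 0 < γ) (hξ : ξ ≠ 0) (a b : ℝ) (ha : 1 ≤ a) (hab : a ≤ b) :
    ‖∫ t in a..b, Complex.exp (Complex.I * (ξ:ℂ) * (t:ℂ)) * ((t ^ (-γ) : ℝ) : ℂ)‖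
      ≤ 2 * a ^ (-γ) / |ξ| := by
  set c : ℂ := Complex.I * (ξ:ℂ) with hc
  have hξ' : (0:ℝ) < |ξ| := abs_pos.2 hξ
  have hcnorm : ‖c‖ = |ξ| := by simp [hc]
  have hcne : c ≠ 0 := by simp [hc, Complex.ext_iff, hξ]
  set u : ℝ → ℂ := fun t => ((t ^ (-γ) : ℝ) : ℂ) with hu_def
  set u' : ℝ → ℂ := fun t => ((-γ * t ^ (-γ - 1) : ℝ) : ℂ) with hu'_def
  set v : ℝ → ℂ := fun t => Complex.exp (c * t) / c with hv_def
  set v' : ℝ → ℂ := fun t => Complex.exp (c * t) with hv'_def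
  have hpos : ∀ x ∈ Set.uIcc a b, (0:ℝ) < x := by
    intro x hx
    have := hx.1
    rw [inf_of_le_left hab] at this
    linarith
  have hu : ∀ x ∈ Set.uIcc a b, HasDerivAt u (u' x) x := fun x hx =>
    (Real.hasDerivAt_rpow_const (Or.inl (hpos x hx).ne')).ofReal_comp
  have hvderiv : ∀ x : ℝ, HasDerivAt v (v' x) x := by
    intro x
    have h : HasDerivAt (fun t : ℝ => c * (t:ℂ)) c x := by
      simpa using (Complex.ofRealCLM.hasDerivAt (x := x)).const_mul c
    have h2 := (h.cexp).div_const c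
    have : Complex.exp (c * x) * c / c = v' x := by
      rw [mul_div_cancel_right₀ _ hcne]
    rwa [this] at h2
  have hv : ∀ x ∈ Set.uIcc a b, HasDerivAt v (v' x) x := fun x _ => hvderiv x
  have hu'cont : ContinuousOn u' (Set.uIcc a b) := by
    apply Complex.continuous_ofReal.comp_continuousOn
    apply ContinuousOn.mul continuousOn_const
    intro x hx
    exact (Real.continuousAt_rpow_const x _ (Or.inl (hpos x hx).ne')).continuousWithinAt
  have hu'int : IntervalIntegrable u' volume a b := hu'cont.intervalIntegrable
  have hv'int : IntervalIntegrable v' volume a b :=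
    (Continuous.continuousOn (by continuity)).intervalIntegrable
  have key : ∫ t in a..b, Complex.exp (Complex.I * (ξ:ℂ) * (t:ℂ)) * ((t ^ (-γ) : ℝ) : ℂ)
      = u b * v b - u a * v a - ∫ t in a..b, u' t * v t := by
    rw [← intervalIntegral.integral_mul_deriv_eq_deriv_mul hu hv hu'int hv'int]
    apply intervalIntegral.integral_congr
    intro x _
    simp [u, v', mul_comm, hc]
  rw [key]
  have hvnorm : ∀ t : ℝ, ‖v t‖ = 1 / |ξ| := by
    intro t
    simp only [hv_def, norm_div, hcnorm]
    rw [Complex.norm_exp]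
    simp [hc]
  have hunorm : ∀ t : ℝ, 0 < t → ‖u t‖ = t ^ (-γ) := by
    intro t ht
    simp only [hu_def, Complex.norm_real, Real.norm_eq_abs]
    exact abs_of_nonneg (Real.rpow_nonneg ht.le _)
  have ha0 : (0:ℝ) < a := lt_of_lt_of_le one_pos ha
  have hb0 : (0:ℝ) < b := lt_of_lt_of_le ha0 hab
  have hI2 : ‖∫ t in a..b, u' t * v t‖ ≤ (a ^ (-γ) - b ^ (-γ)) / |ξ| := by
    have h1 : ‖∫ t in a..b, u' t * v t‖ ≤ ∫ t in a..b, ‖u' t * v t‖ :=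
      intervalIntegral.norm_integral_le_integral_norm hab
    have h2 : (∫ t in a..b, ‖u' t * v t‖) = ∫ t in a..b, (γ / |ξ|) * t ^ (-γ - 1) := by
      apply intervalIntegral.integral_congr
      intro x hx
      have hx0 := hpos x hx
      simp only [norm_mul, hvnorm, hu'_def, Complex.norm_real, Real.norm_eq_abs, abs_mul,
        abs_neg, abs_of_pos hγ0, abs_of_nonneg (Real.rpow_nonneg hx0.le (-γ - 1))]
      ring
    refine h1.trans ?_
    rw [h2, intervalIntegral.integral_const_mul, integral_rpow
      (Or.inr ⟨by intro h; rw [show -γ - 1 = -1 ↔ γ = 0 by constructor <;> intro <;> linarith] at h; linarith,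
        fun h => absurd (hpos 0 h) (lt_irrefl 0)⟩)]
    have heq : -γ - 1 + 1 = -γ := by ring
    rw [heq]
    have hγne : γ ≠ 0 := hγ0.ne'
    have hξne : |ξ| ≠ 0 := hξ'.ne'
    apply le_of_eq
    field_simp
    ring
  calc ‖u b * v b - u a * v a - ∫ t in a..b, u' t * v t‖
      ≤ ‖u b * v b - u a * v a‖ + ‖∫ t in a..b, u' t * v t‖ := norm_sub_le _ _
    _ ≤ ‖u b * v b‖ + ‖u a * v a‖ + ‖∫ t in a..b, u' t * v t‖ := by
        have := norm_sub_le (u b * v b) (u a * v a); linarith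
    _ ≤ b ^ (-γ) / |ξ| + a ^ (-γ) / |ξ| + (a ^ (-γ) - b ^ (-γ)) / |ξ| := by
        rw [norm_mul, norm_mul, hvnorm, hvnorm, hunorm b hb0, hunorm a ha0]
        have h1 : b ^ (-γ) * (1 / |ξ|) = b ^ (-γ) / |ξ| := by ring
        have h2 : a ^ (-γ) * (1 / |ξ|) = a ^ (-γ) / |ξ| := by ring
        rw [h1, h2]
        linarith [hI2]
    _ = 2 * a ^ (-γ) / |ξ| := by ring

lemma osc_small (γ ξ : ℝ) (hγ0 : 0 < γ) (hγ1 : γ < 1) (a b : ℝ) (ha : 0 ≤ a) (hab : a ≤ b)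
    (hb : b ≤ 1) :
    ‖∫ t in a..b, Complex.exp (Complex.I * (ξ:ℂ) * (t:ℂ)) * ((t ^ (-γ) : ℝ) : ℂ)‖
      ≤ 1 / (1 - γ) := by
  have h1 : ‖∫ t in a..b, Complex.exp (Complex.I * (ξ:ℂ) * (t:ℂ)) * ((t ^ (-γ) : ℝ) : ℂ)‖
      ≤ ∫ t in a..b, ‖Complex.exp (Complex.I * (ξ:ℂ) * (t:ℂ)) * ((t ^ (-γ) : ℝ) : ℂ)‖ :=
    intervalIntegral.norm_integral_le_integral_norm hab
  have h2 : (∫ t in a..b, ‖Complex.exp (Complex.I * (ξ:ℂ) * (t:ℂ)) * ((t ^ (-γ) : ℝ) : ℂ)‖)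
      = ∫ t in a..b, t ^ (-γ) := by
    apply intervalIntegral.integral_congr
    intro x hx
    have hx0 : 0 ≤ x := by
      have := hx.1
      rw [inf_of_le_left hab] at this
      linarith
    simp only [norm_mul, Complex.norm_exp, Complex.norm_real, Real.norm_eq_abs]
    rw [abs_of_nonneg (Real.rpow_nonneg hx0 (-γ))]
    simp
  rw [h2, integral_rpow (Or.inl (by linarith))] at h1
  have heq : -γ + 1 = 1 - γ := by ring
  rw [heq] at h1
  have hb1 : b ^ (1 - γ) ≤ 1 := Real.rpow_le_one (le_trans ha hab) hb (by linarith)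
  have ha1 : 0 ≤ a ^ (1 - γ) := Real.rpow_nonneg ha _
  refine h1.trans ?_
  apply div_le_div_of_nonneg_right _ (by linarith)
  linarith

theorem oscillatory_integral_bound (γ ξ : ℝ) (hγ : γ ∈ Set.Ioo (0:ℝ) 1) (hξ : ξ ≠ 0)
    (N₁ N₂ : ℝ) (hN₁ : 0 ≤ N₁) (hN : N₁ < N₂) :
    ‖∫ t in N₁..N₂, Complex.exp (Complex.I * (ξ : ℂ) * (t : ℂ)) * ((t ^ (-γ) : ℝ) : ℂ)‖ ≤
      (2:ℝ) ^ γ * (2 / |ξ| + 1 / (1 - γ)) / (N₁ + 1) ^ γ := by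
  obtain ⟨hγ0, hγ1⟩ := hγ
  have hξ' : (0:ℝ) < |ξ| := abs_pos.2 hξ
  have hR0 : (0:ℝ) ≤ 2 / |ξ| + 1 / (1 - γ) := by
    have : (0:ℝ) < 1 - γ := by linarith
    positivity
  have hN1γpos : (0:ℝ) < (N₁ + 1) ^ γ := Real.rpow_pos_of_pos (by linarith) γ
  have Rle : ∀ A : ℝ, A ≤ 2 / |ξ| + 1 / (1 - γ) → (N₁ + 1) ^ γ ≤ 2 ^ γ →
      A ≤ (2:ℝ) ^ γ * (2 / |ξ| + 1 / (1 - γ)) / (N₁ + 1) ^ γ := by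
    intro A hA hkey
    refine hA.trans ?_
    rw [le_div_iff₀ hN1γpos]
    calc (2 / |ξ| + 1 / (1 - γ)) * (N₁ + 1) ^ γ ≤ (2 / |ξ| + 1 / (1 - γ)) * 2 ^ γ := by
          exact mul_le_mul_of_nonneg_left hkey hR0
      _ = 2 ^ γ * (2 / |ξ| + 1 / (1 - γ)) := by ring
  rcases le_or_gt 1 N₁ with h1 | h1
  · have hb := osc_ibp γ ξ hγ0 hξ N₁ N₂ h1 hN.le
    refine hb.trans ?_
    have hN1p : (0:ℝ) < N₁ := lt_of_lt_of_le one_pos h1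
    have hN1γ : (0:ℝ) < N₁ ^ γ := Real.rpow_pos_of_pos hN1p γ
    have key : (N₁ + 1) ^ γ ≤ 2 ^ γ * N₁ ^ γ := by
      rw [← Real.mul_rpow (by norm_num) hN1p.le]
      exact Real.rpow_le_rpow (by linarith) (by linarith) hγ0.le
    have step1 : 2 * N₁ ^ (-γ) / |ξ| ≤ 2 ^ γ * (2 / |ξ|) / (N₁ + 1) ^ γ := by
      have lhs_eq : 2 * N₁ ^ (-γ) / |ξ| = (2 / |ξ|) / N₁ ^ γ := by
        rw [Real.rpow_neg hN1p.le]; ring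
      rw [lhs_eq, div_le_div_iff₀ hN1γ hN1γpos]
      calc 2 / |ξ| * (N₁ + 1) ^ γ ≤ 2 / |ξ| * (2 ^ γ * N₁ ^ γ) := by
            apply mul_le_mul_of_nonneg_left key; positivity
        _ = 2 ^ γ * (2 / |ξ|) * N₁ ^ γ := by ring
    refine step1.trans ?_
    gcongr
    have h1γ : (0:ℝ) < 1 - γ := by linarith
    have : (0:ℝ) ≤ 1 / (1 - γ) := by positivity
    linarith
  · have key2 : (N₁ + 1) ^ γ ≤ 2 ^ γ :=
      Real.rpow_le_rpow (by linarith) (by linarith) hγ0.le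
    rcases le_or_gt N₂ 1 with h2 | h2
    · exact Rle _ ((osc_small γ ξ hγ0 hγ1 N₁ N₂ hN₁ hN.le h2).trans
        (le_add_of_nonneg_left (by positivity))) key2
    · have hi1 := osc_integrable γ ξ hγ1 N₁ 1
      have hi2 := osc_integrable γ ξ hγ1 1 N₂
      rw [← intervalIntegral.integral_add_adjacent_intervals hi1 hi2]
      have hb1 := osc_small γ ξ hγ0 hγ1 N₁ 1 hN₁ h1.le le_rfl
      have hb2 := osc_ibp γ ξ hγ0 hξ 1 N₂ le_rfl h2.le
      rw [Real.one_rpow (-γ)] at hb2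
      refine Rle _ ?_ key2
      calc ‖(∫ t in N₁..(1:ℝ), Complex.exp (Complex.I * (ξ:ℂ) * (t:ℂ)) * ((t ^ (-γ) : ℝ) : ℂ))
            + ∫ t in (1:ℝ)..N₂, Complex.exp (Complex.I * (ξ:ℂ) * (t:ℂ)) * ((t ^ (-γ) : ℝ) : ℂ)‖
          ≤ _ + _ := norm_add_le _ _
        _ ≤ 1 / (1 - γ) + 2 * 1 / |ξ| := add_le_add hb1 hb2
        _ = 2 / |ξ| + 1 / (1 - γ) := by ring
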